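/- Concatenation lemma: suppose monic real polynomials P₁ and P₂ of degrees d₁ and d₂, with all coefficients nonzero, define the sign patterns (+, σ₁) and (+, σ₂) and realize the pairs (pos₁, neg₁) and (pos₂, neg₂) respectively. Then there exists ε₀ > 0 such that for all 0 < ε < ε₀ the polynomial ε^{d₂} P₁(x) P₂(x/ε) realizes the pair (pos₁ + pos₂, neg₁ + neg₂), and it defines the sign pattern (+, σ₁, σ₂) if the last sign of σ₁ is +, and the sign pattern (+, σ₁, −σ₂) if the last sign of σ₁ is −, where −σ₂ is obtained from σ₂ by changing each + into − and vice versa. -/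

import Mathlib

open Polynomial Filter Topology

/-- A real polynomial `P` realizes the pair `(pos, neg)` if it has exactly `pos`
distinct positive roots and exactly `neg` distinct negative roots, all of them
simple, and no other real roots. -/
def realizesPair (P : Polynomial ℝ) (pos neg : ℕ) : Prop :=
  P.roots.Nodup ∧
  (P.roots.filter (fun x => 0 < x)).card = pos ∧
  (P.roots.filter (fun x => x < 0)).card = neg ∧
  (0 : ℝ) ∉ P.roots

lemma myCoeffComp (P : Polynomial ℝ) (b : ℝ) (n : ℕ) :
    (P.comp (C b * X)).coeff n = P.coeff n * b ^ n := by
  have h := P.as_sum_range' (P.natDegree + 1) (Nat.lt_succ_self _)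
  conv_lhs => rw [h]
  rw [Polynomial.comp, Polynomial.eval₂_finset_sum, finset_sum_coeff]
  have hc : ∀ i : ℕ, eval₂ C (C b * X) (monomial i (P.coeff i)) = C (P.coeff i * b ^ i) * X ^ i := by
    intro i
    rw [← Polynomial.comp, monomial_comp, mul_pow, ← C_pow, ← mul_assoc, ← C_mul]
  simp_rw [hc, coeff_C_mul, coeff_X_pow]
  by_cases hn : n < P.natDegree + 1
  · rw [Finset.sum_eq_single n]
    · simp
    · intro i _ hne; simp [Ne.symm hne]
    · intro hno; exact absurd (Finset.mem_range.mpr hn) hno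
  · push_neg at hn
    rw [coeff_eq_zero_of_natDegree_lt (by omega), zero_mul]
    apply Finset.sum_eq_zero
    intro i hi
    rw [Finset.mem_range] at hi
    simp [show ¬ (n = i) by omega]

lemma myCompCancel (P : Polynomial ℝ) {a : ℝ} (ha : a ≠ 0) :
    (P.comp (C a * X)).comp (C a⁻¹ * X) = P := by
  rw [comp_assoc, mul_comp, C_comp, X_comp, ← mul_assoc, ← C_mul,
    mul_inv_cancel₀ ha, C_1, one_mul, comp_X]

lemma myCompNeZero {P : Polynomial ℝ} (hP : P ≠ 0) {a : ℝ} (ha : a ≠ 0) :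
    P.comp (C a * X) ≠ 0 := by
  intro h
  apply hP
  rw [← myCompCancel P ha, h, zero_comp]

lemma myDvdComp {u v : Polynomial ℝ} {a : ℝ} (ha : a ≠ 0) :
    u.comp (C a * X) ∣ v.comp (C a * X) ↔ u ∣ v := by
  constructor
  · rintro ⟨w, hw⟩
    refine ⟨w.comp (C a⁻¹ * X), ?_⟩
    have := congrArg (fun p => Polynomial.comp p (C a⁻¹ * X)) hw
    simpa [mul_comp, myCompCancel _ ha] using this
  · rintro ⟨w, hw⟩
    exact ⟨w.comp (C a * X), by rw [hw, mul_comp]⟩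

lemma myRootMultComp {P : Polynomial ℝ} (hP : P ≠ 0) {a x : ℝ} (ha : a ≠ 0) :
    rootMultiplicity x (P.comp (C a * X)) = rootMultiplicity (a * x) P := by
  have hc0 : P.comp (C a * X) ≠ 0 := myCompNeZero hP ha
  have key : ∀ n : ℕ, (X - C x) ^ n ∣ P.comp (C a * X) ↔ (X - C (a * x)) ^ n ∣ P := by
    intro n
    rw [← myDvdComp (u := (X - C (a*x)) ^ n) (v := P) ha]
    have hφ : ((X - C (a * x)) ^ n).comp (C a * X) = C (a ^ n) * (X - C x) ^ n := by
      rw [pow_comp, sub_comp, X_comp, C_comp, C_pow, ← mul_pow]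
      congr 1
      rw [mul_sub, ← C_mul]
    rw [hφ]
    exact ((isUnit_C.mpr (Ne.isUnit (pow_ne_zero n ha))).mul_left_dvd).symm
  apply le_antisymm
  · rw [le_rootMultiplicity_iff hP, ← key]
    exact pow_rootMultiplicity_dvd _ _
  · rw [le_rootMultiplicity_iff hc0, key]
    exact pow_rootMultiplicity_dvd _ _

lemma myRootsComp {P : Polynomial ℝ} (hP : P ≠ 0) {a : ℝ} (ha : a ≠ 0) :
    (P.comp (C a * X)).roots = P.roots.map (fun r => a⁻¹ * r) := by
  classical
  ext x
  rw [count_roots, myRootMultComp hP ha]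
  have hx : x = (fun r => a⁻¹ * r) (a * x) := by
    simp [← mul_assoc, inv_mul_cancel₀ ha]
  conv_rhs => rw [hx]
  rw [Multiset.count_map_eq_count' _ _ (mul_right_injective₀ (inv_ne_zero ha)), count_roots]


/-- Concatenation lemma. `P₁`, `P₂` are monic of degrees `d₁`, `d₂`, with all
coefficients nonzero (so each defines a sign pattern `(+, σᵢ)`), realizing the
pairs `(pos₁, neg₁)`, `(pos₂, neg₂)`. Then for all sufficiently small `ε > 0`
the polynomial `Q(x) = ε^{d₂} P₁(x) P₂(x/ε)` realizes `(pos₁+pos₂, neg₁+neg₂)`;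
its sign pattern agrees with that of `P₁` on the coefficients of `x^j`,
`d₂ ≤ j ≤ d₁+d₂` (the part `(+, σ₁)`), and on the lower coefficients it agrees
with that of `P₂` if the last sign of `σ₁` (the sign of `P₁.coeff 0`) is `+`,
and is opposite to it if that sign is `−`. -/
theorem stmt12 (d₁ d₂ : ℕ) (P₁ P₂ : Polynomial ℝ)
    (h₁ : P₁.Monic) (hdeg₁ : P₁.natDegree = d₁)
    (h₂ : P₂.Monic) (hdeg₂ : P₂.natDegree = d₂)
    (hnz₁ : ∀ j ≤ d₁, P₁.coeff j ≠ 0) (hnz₂ : ∀ j ≤ d₂, P₂.coeff j ≠ 0)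
    (pos₁ neg₁ pos₂ neg₂ : ℕ)
    (hr₁ : realizesPair P₁ pos₁ neg₁) (hr₂ : realizesPair P₂ pos₂ neg₂) :
    ∃ ε₀ : ℝ, 0 < ε₀ ∧ ∀ ε : ℝ, 0 < ε → ε < ε₀ →
      ∀ Q : Polynomial ℝ,
        Q = Polynomial.C (ε ^ d₂) * P₁ *
              (P₂.comp (Polynomial.C ε⁻¹ * Polynomial.X)) →
        realizesPair Q (pos₁ + pos₂) (neg₁ + neg₂) ∧
        (∀ j : ℕ, d₂ ≤ j → j ≤ d₁ + d₂ → 0 < Q.coeff j * P₁.coeff (j - d₂)) ∧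
        (0 < P₁.coeff 0 → ∀ j < d₂, 0 < Q.coeff j * P₂.coeff j) ∧
        (P₁.coeff 0 < 0 → ∀ j < d₂, Q.coeff j * P₂.coeff j < 0) := by
  classical
  obtain ⟨hnd₁, hpos₁, hneg₁, h0₁⟩ := hr₁
  obtain ⟨hnd₂, hpos₂, hneg₂, h0₂⟩ := hr₂
  have hP₁0 : P₁ ≠ 0 := h₁.ne_zero
  have hP₂0 : P₂ ≠ 0 := h₂.ne_zero
  set F : ℕ → ℝ → ℝ := fun j ε =>
    ∑ p ∈ Finset.HasAntidiagonal.antidiagonal j, P₁.coeff p.1 * P₂.coeff p.2 * ε ^ (d₂ - p.2) with hF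
  set G : ℕ → ℝ → ℝ := fun j ε =>
    ∑ p ∈ Finset.HasAntidiagonal.antidiagonal j, P₁.coeff p.1 * P₂.coeff p.2 * ε ^ (j - p.2) with hG
  -- Q coefficients equal F j ε
  have hQcoeff : ∀ ε : ℝ, ε ≠ 0 → ∀ j : ℕ,
      (C (ε ^ d₂) * P₁ * (P₂.comp (C ε⁻¹ * X))).coeff j = F j ε := by
    intro ε hεne j
    rw [mul_assoc, coeff_C_mul, coeff_mul, Finset.mul_sum, hF]
    refine Finset.sum_congr rfl fun p _ => ?_
    rw [myCoeffComp]
    by_cases hb : p.2 ≤ d₂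
    · rw [pow_sub₀ ε hεne hb, inv_pow]; ring
    · rw [coeff_eq_zero_of_natDegree_lt (by omega : P₂.natDegree < p.2)]
      ring
  have hFcont : ∀ j, Continuous (F j) := by
    intro j; rw [hF]; fun_prop
  have hGcont : ∀ j, Continuous (G j) := by
    intro j; rw [hG]; fun_prop
  have hF0 : ∀ j, d₂ ≤ j → F j 0 = P₁.coeff (j - d₂) := by
    intro j hdj
    rw [hF]
    dsimp only
    rw [Finset.sum_eq_single (j - d₂, d₂)]
    · have : P₂.coeff d₂ = 1 := by rw [← hdeg₂]; exact h₂.coeff_natDegree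
      simp [this]
    · intro p hp hne
      rw [Finset.HasAntidiagonal.mem_antidiagonal] at hp
      rcases lt_trichotomy p.2 d₂ with h | h | h
      · rw [zero_pow (by omega)]; ring
      · exact absurd (Prod.ext (by omega) h) hne
      · rw [coeff_eq_zero_of_natDegree_lt (by omega : P₂.natDegree < p.2)]; ring
    · intro hno
      exact absurd (Finset.HasAntidiagonal.mem_antidiagonal.mpr (by omega)) hno
  have hG0 : ∀ j, G j 0 = P₁.coeff 0 * P₂.coeff j := by
    intro j
    rw [hG]
    dsimp only
    rw [Finset.sum_eq_single (0, j)]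
    · simp
    · intro p hp hne
      rw [Finset.HasAntidiagonal.mem_antidiagonal] at hp
      rcases lt_or_eq_of_le (by omega : p.2 ≤ j) with h | h
      · rw [zero_pow (by omega)]; ring
      · exact absurd (Prod.ext (by omega) h) hne
    · intro hno
      exact absurd (Finset.HasAntidiagonal.mem_antidiagonal.mpr (by omega)) hno
  have hFG : ∀ j, j ≤ d₂ → ∀ ε : ℝ, F j ε = ε ^ (d₂ - j) * G j ε := by
    intro j hj ε
    rw [hF, hG, Finset.mul_sum]
    refine Finset.sum_congr rfl fun p hp => ?_
    rw [Finset.HasAntidiagonal.mem_antidiagonal] at hp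
    rw [show d₂ - p.2 = (d₂ - j) + (j - p.2) from by omega, pow_add]
    ring
  -- eventual facts
  have EvA : ∀ᶠ ε in nhdsWithin (0:ℝ) (Set.Ioi 0), ∀ j ∈ Finset.range (d₁ + d₂ + 1),
      d₂ ≤ j → 0 < F j ε * P₁.coeff (j - d₂) := by
    rw [Filter.eventually_all_finset]
    intro j hj
    by_cases hdj : d₂ ≤ j
    · have hjle : j ≤ d₁ + d₂ := by
        have := Finset.mem_range.mp hj; omega
      have hc : P₁.coeff (j - d₂) ≠ 0 := hnz₁ _ (by omega)
      have hT : Filter.Tendsto (fun ε => F j ε * P₁.coeff (j - d₂))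
          (nhdsWithin (0:ℝ) (Set.Ioi 0)) (𝓝 (P₁.coeff (j - d₂) * P₁.coeff (j - d₂))) := by
        have h1 := ((hFcont j).tendsto 0).mono_left (nhdsWithin_le_nhds (s := Set.Ioi (0:ℝ)))
        rw [hF0 j hdj] at h1
        exact h1.mul tendsto_const_nhds
      filter_upwards [hT.eventually (eventually_gt_nhds (mul_self_pos.mpr hc))] with ε h _
      exact h
    · filter_upwards with ε h
      exact absurd h hdj
  have EvB : ∀ᶠ ε in nhdsWithin (0:ℝ) (Set.Ioi 0), ∀ j ∈ Finset.range d₂,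
      (0 < P₁.coeff 0 → 0 < F j ε * P₂.coeff j) ∧
      (P₁.coeff 0 < 0 → F j ε * P₂.coeff j < 0) := by
    rw [Filter.eventually_all_finset]
    intro j hj
    have hjlt := Finset.mem_range.mp hj
    have hp2 : P₂.coeff j ≠ 0 := hnz₂ j (le_of_lt hjlt)
    have hεpos : ∀ᶠ ε in nhdsWithin (0:ℝ) (Set.Ioi 0), (0:ℝ) < ε :=
      eventually_mem_nhdsWithin
    have hGt : Filter.Tendsto (fun ε => G j ε * P₂.coeff j)
        (nhdsWithin (0:ℝ) (Set.Ioi 0)) (𝓝 (P₁.coeff 0 * P₂.coeff j * P₂.coeff j)) := by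
      have h1 := ((hGcont j).tendsto 0).mono_left (nhdsWithin_le_nhds (s := Set.Ioi (0:ℝ)))
      rw [hG0 j] at h1
      exact h1.mul tendsto_const_nhds
    rcases (hnz₁ 0 (Nat.zero_le _)).lt_or_gt with hc | hc
    · have hlim : P₁.coeff 0 * P₂.coeff j * P₂.coeff j < 0 := by
        rw [mul_assoc]
        exact mul_neg_of_neg_of_pos hc (mul_self_pos.mpr hp2)
      filter_upwards [hGt.eventually (eventually_lt_nhds hlim), hεpos] with ε hGε hε
      refine ⟨fun h => absurd h (not_lt.mpr (le_of_lt hc)), fun _ => ?_⟩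
      rw [hFG j (le_of_lt hjlt) ε, mul_assoc]
      exact mul_neg_of_pos_of_neg (pow_pos hε _) hGε
    · have hlim : 0 < P₁.coeff 0 * P₂.coeff j * P₂.coeff j := by
        rw [mul_assoc]
        exact mul_pos hc (mul_self_pos.mpr hp2)
      filter_upwards [hGt.eventually (eventually_gt_nhds hlim), hεpos] with ε hGε hε
      refine ⟨fun _ => ?_, fun h => absurd hc (not_lt.mpr (le_of_lt h))⟩
      rw [hFG j (le_of_lt hjlt) ε, mul_assoc]
      exact mul_pos (pow_pos hε _) hGε
  have EvC : ∀ᶠ ε in nhdsWithin (0:ℝ) (Set.Ioi 0), ∀ r₁ ∈ P₁.roots.toFinset,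
      ∀ r₂ ∈ P₂.roots.toFinset, ε * r₂ ≠ r₁ := by
    rw [Filter.eventually_all_finset]
    intro r₁ hr1
    rw [Filter.eventually_all_finset]
    intro r₂ _
    have hr1ne : (0:ℝ) ≠ r₁ := by
      intro h
      exact h0₁ (h ▸ Multiset.mem_toFinset.mp hr1)
    have hT : Filter.Tendsto (fun ε : ℝ => ε * r₂) (nhdsWithin (0:ℝ) (Set.Ioi 0)) (𝓝 0) := by
      have h1 : Filter.Tendsto (fun ε : ℝ => ε * r₂) (𝓝 0) (𝓝 (0 * r₂)) :=
        (continuous_id.mul continuous_const).tendsto 0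
      rw [zero_mul] at h1
      exact h1.mono_left (nhdsWithin_le_nhds (s := Set.Ioi (0:ℝ)))
    exact hT.eventually_ne hr1ne
  have Hall := EvA.and (EvB.and EvC)
  obtain ⟨ε₀, hε₀mem, hsub⟩ := mem_nhdsGT_iff_exists_Ioo_subset.mp Hall
  refine ⟨ε₀, hε₀mem, fun ε hε0 hεlt Q hQ => ?_⟩
  obtain ⟨hA, hB, hC⟩ := hsub ⟨hε0, hεlt⟩
  have hεne : ε ≠ 0 := ne_of_gt hε0
  have hQc : ∀ j, Q.coeff j = F j ε := fun j => by rw [hQ]; exact hQcoeff ε hεne j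
  have hcomp0 : P₂.comp (C ε⁻¹ * X) ≠ 0 := myCompNeZero hP₂0 (inv_ne_zero hεne)
  have hroots : Q.roots = P₁.roots + P₂.roots.map (fun r => ε * r) := by
    rw [hQ, mul_assoc, roots_C_mul _ (pow_ne_zero _ hεne),
      roots_mul (mul_ne_zero hP₁0 hcomp0), myRootsComp hP₂0 (inv_ne_zero hεne), inv_inv]
  refine ⟨⟨?_, ?_, ?_, ?_⟩, ?_, ?_, ?_⟩
  · -- Nodup
    rw [hroots, Multiset.nodup_add]
    refine ⟨hnd₁, hnd₂.map (mul_right_injective₀ hεne), ?_⟩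
    rw [Multiset.disjoint_left]
    intro x hx1 hx2
    obtain ⟨r₂, hr₂, rfl⟩ := Multiset.mem_map.mp hx2
    exact hC _ (Multiset.mem_toFinset.mpr hx1) r₂ (Multiset.mem_toFinset.mpr hr₂) rfl
  · -- positive roots count
    rw [hroots, Multiset.filter_add, Multiset.card_add, hpos₁, Multiset.filter_map,
      Multiset.card_map]
    have hfilt : Multiset.filter ((fun x => (0:ℝ) < x) ∘ fun r => ε * r) P₂.roots =
        Multiset.filter (fun x => (0:ℝ) < x) P₂.roots := by
      apply Multiset.filter_congr
      intro x _
      simp only [Function.comp]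
      constructor
      · intro h; nlinarith
      · intro h; exact mul_pos hε0 h
    rw [hfilt, hpos₂]
  · -- negative roots count
    rw [hroots, Multiset.filter_add, Multiset.card_add, hneg₁, Multiset.filter_map,
      Multiset.card_map]
    have hfilt : Multiset.filter ((fun x => x < (0:ℝ)) ∘ fun r => ε * r) P₂.roots =
        Multiset.filter (fun x => x < (0:ℝ)) P₂.roots := by
      apply Multiset.filter_congr
      intro x _
      simp only [Function.comp]
      constructor
      · intro h; nlinarith
      · intro h; exact mul_neg_of_pos_of_neg hε0 h
    rw [hfilt, hneg₂]
  · -- zero not a root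
    rw [hroots, Multiset.mem_add]
    rintro (h | h)
    · exact h0₁ h
    · obtain ⟨r, hr, h0⟩ := Multiset.mem_map.mp h
      have : r = 0 := by
        rcases mul_eq_zero.mp h0 with h' | h'
        · exact absurd h' hεne
        · exact h'
      exact h0₂ (this ▸ hr)
  · -- upper coefficients
    intro j hd hj
    rw [hQc]
    exact hA j (Finset.mem_range.mpr (by omega)) hd
  · -- lower coefficients, positive case
    intro hcpos j hj
    rw [hQc]
    exact (hB j (Finset.mem_range.mpr hj)).1 hcpos
  · -- lower coefficients, negative case
    intro hcneg j hj
    rw [hQc]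
    exact (hB j (Finset.mem_range.mpr hj)).2 hcneg
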